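/- The mixed anticommutators satisfy D_rel† D_rel^c + D_rel^c D_rel† = −gh_rel and (D_rel^c)† D_rel + D_rel (D_rel^c)† = −gh_rel. -/

import Mathlib

/-- the mixed anticommutators satisfy
`D_rel† D_rel^c + D_rel^c D_rel† = −gh_rel` and
`(D_rel^c)† D_rel + D_rel (D_rel^c)† = −gh_rel`. -/
theorem mixed_anticommutators
    {A : Type*} [Ring A] [Algebra ℂ A]
    (Drel Drelc Dreldag Drelcdag Jp Jm gh : A)
    (dag : A → A)
    -- † is an additive antiautomorphism
    (hdagadd : ∀ x y, dag (x + y) = dag x + dag y)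
    (hdagmul : ∀ x y, dag (x * y) = dag y * dag x)
    -- † exchanges the operators with their conjugates
    (hdagDrel : dag Drel = Dreldag) (hdagDreldag : dag Dreldag = Drel)
    (hdagDrelc : dag Drelc = Drelcdag) (hdagDrelcdag : dag Drelcdag = Drelc)
    (hdagJp : dag Jp = Jm) (hdagJm : dag Jm = Jp)
    -- gh_rel = [J⁺, J⁻]
    (hgh : gh = Jp * Jm - Jm * Jp)
    -- [J⁻, D_rel^c] = D_rel† and (D_rel^c)² = J⁺
    (hJmDrelc : Jm * Drelc - Drelc * Jm = Dreldag)
    (hDrelc2 : Drelc * Drelc = Jp) :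
    (Dreldag * Drelc + Drelc * Dreldag = -gh)
    ∧ (Drelcdag * Drel + Drel * Drelcdag = -gh) := by
  have hzero : dag 0 = 0 := by
    have h := hdagadd 0 0
    simp only [add_zero] at h
    exact right_eq_add.mp h
  have hneg : ∀ x : A, dag (-x) = - dag x := by
    intro x
    have h := hdagadd x (-x)
    simp only [add_neg_cancel, hzero] at h
    exact (neg_eq_of_add_eq_zero_right h.symm).symm
  have hsub : ∀ x y : A, dag (x - y) = dag x - dag y := by
    intro x y
    rw [sub_eq_add_neg, hdagadd, hneg, sub_eq_add_neg]
  have h1 : Dreldag * Drelc + Drelc * Dreldag = -gh := by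
    rw [← hJmDrelc, hgh, ← hDrelc2]
    noncomm_ring
  have hdaggh : dag gh = gh := by
    rw [hgh, hsub, hdagmul, hdagmul, hdagJp, hdagJm]
  have h2 := congrArg dag h1
  rw [hdagadd, hdagmul, hdagmul, hdagDrelc, hdagDreldag, hneg, hdaggh] at h2
  exact ⟨h1, h2⟩
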